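/- Let q be a prime power, m, r, g, M positive integers, and let C ⊆ F_{q^m}^{gr} be an F_{q^m}-linear code with C ≠ {0}. Let C ⊗ F_{q^{mM}} ⊆ F_{q^{mM}}^{gr} denote the F_{q^{mM}}-linear span of C inside F_{q^{mM}}^{gr} (via the field extension F_{q^m} ⊆ F_{q^{mM}}). Then: (i) dim_{F_{q^{mM}}}(C ⊗ F_{q^{mM}}) = dim_{F_{q^m}}(C); (ii) the minimum sum-rank distance of C ⊗ F_{q^{mM}} for the length partition (g,r) over F_q equals the minimum sum-rank distance of C for the length partition (g,r) over F_q; and (iii) C is MSRD for the length partition (g,r) over F_q if and only if C ⊗ F_{q^{mM}} is MSRD for the length partition (g,r) over F_q. -/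

import Mathlib

/-- The sum-rank weight of a vector partitioned into blocks of length `r`, over the base
field `Fq`: the sum over blocks of the `Fq`-dimension of the span of the block entries. -/
noncomputable def wtSR (Fq : Type) {L : Type} [Field Fq] [Field L] [Algebra Fq L]
    {ι : Type} [Fintype ι] {r : ℕ} (c : ι × Fin r → L) : ℕ :=
  ∑ i : ι, Module.finrank Fq
    ↥(Submodule.span Fq (Set.range fun j : Fin r => c (i, j)))

/-- The minimum sum-rank distance of a code (a set of vectors), over the base field
`Fq`, for blocks of length `r`. -/
noncomputable def dSR (Fq : Type) {L : Type} [Field Fq] [Field L] [Algebra Fq L]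
    {ι : Type} [Fintype ι] {r : ℕ} (C : Set (ι × Fin r → L)) : ℕ :=
  sInf {w | ∃ c ∈ C, ∃ d ∈ C, c ≠ d ∧ wtSR Fq (c - d) = w}

section Aux

variable {Fq L : Type} [Field Fq] [Field L] [Algebra Fq L]
  {ι : Type} [Fintype ι] {r : ℕ}

lemma wtSR_comp_le [FiniteDimensional Fq L] (ψ : L →ₗ[Fq] L) (c : ι × Fin r → L) :
    wtSR Fq (fun x => ψ (c x)) ≤ wtSR Fq c := by
  unfold wtSR
  refine Finset.sum_le_sum fun i _ => ?_
  have h1 : (Set.range fun j : Fin r => ψ (c (i, j)))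
      = ψ '' (Set.range fun j : Fin r => c (i, j)) := by
    rw [← Set.range_comp]; rfl
  rw [h1, ← Submodule.map_span]
  exact Submodule.finrank_map_le ψ _

lemma dSR_eq_of_zero_mem {S : Set (ι × Fin r → L)} (h0 : (0 : ι × Fin r → L) ∈ S)
    (hsub : ∀ a ∈ S, ∀ b ∈ S, a - b ∈ S) :
    dSR Fq S = sInf {w | ∃ e ∈ S, e ≠ 0 ∧ wtSR Fq e = w} := by
  unfold dSR
  congr 1
  ext w
  constructor
  · rintro ⟨c, hc, d, hd, hne, rfl⟩
    exact ⟨c - d, hsub c hc d hd, sub_ne_zero.mpr hne, rfl⟩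
  · rintro ⟨e, he, hne, rfl⟩
    exact ⟨e, he, 0, h0, hne, by rw [sub_zero]⟩

lemma key_coord {Fm : Type} [Field Fm] [Algebra Fm L] {n ιb : Type}
    (b : Module.Basis ιb Fm L) {k : ℕ} (a : Fin k → L) (c : Fin k → n → L)
    (w : Fin k → n → Fm) (hw : ∀ i x, algebraMap Fm L (w i x) = c i x)
    (t : ιb) (x : n) :
    algebraMap Fm L (b.coord t ((∑ i, a i • c i) x))
      = (∑ i, (b.coord t (a i)) • c i) x := by
  have h1 : (∑ i, a i • c i) x = ∑ i, w i x • a i := by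
    simp only [Finset.sum_apply, Pi.smul_apply, smul_eq_mul]
    refine Finset.sum_congr rfl fun i _ => ?_
    rw [← hw, Algebra.smul_def, mul_comm]
  rw [h1, map_sum, map_sum]
  simp only [Finset.sum_apply, Pi.smul_apply]
  refine Finset.sum_congr rfl fun i _ => ?_
  rw [LinearMap.map_smul, smul_eq_mul, map_mul, hw, Algebra.smul_def, mul_comm]

end Aux

/-- Extending the field of linearity of a linear code from `F_{q^m}` to
`F_{q^{mM}}` preserves the dimension, the minimum sum-rank distance, and the MSRD
property (for the length partition `(g,r)` over `F_q`). -/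
theorem extend_scalars_preserves_MSRD
    (q m M g r : ℕ) (hq : IsPrimePow q) (hm : 0 < m) (hM : 0 < M)
    (hg : 0 < g) (hr : 0 < r)
    (Fq Fm L : Type) [Field Fq] [Field Fm] [Field L]
    [Fintype Fq] [Fintype Fm] [Fintype L]
    [Algebra Fq Fm] [Algebra Fm L] [Algebra Fq L] [IsScalarTower Fq Fm L]
    (hcq : Fintype.card Fq = q) (hcm : Fintype.card Fm = q ^ m)
    (hcL : Fintype.card L = q ^ (m * M))
    (C : Submodule Fm (Fin g × Fin r → L))
    (hCval : ∀ c ∈ C, ∀ x, c x ∈ Set.range (algebraMap Fm L))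
    (hC : C ≠ ⊥) :
    Module.finrank L ↥(Submodule.span L (C : Set (Fin g × Fin r → L)))
        = Module.finrank Fm ↥C ∧
    dSR Fq ((Submodule.span L (C : Set (Fin g × Fin r → L)) :
        Submodule L (Fin g × Fin r → L)) : Set (Fin g × Fin r → L))
        = dSR Fq (C : Set (Fin g × Fin r → L)) ∧
    (Nat.card ↥C
        = (q ^ m) ^ (g * r - dSR Fq (C : Set (Fin g × Fin r → L)) + 1) ↔
      Nat.card ↥(Submodule.span L (C : Set (Fin g × Fin r → L)))
        = (q ^ (m * M)) ^ (g * r - dSR Fq ((Submodule.span L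
            (C : Set (Fin g × Fin r → L)) : Submodule L (Fin g × Fin r → L)) :
            Set (Fin g × Fin r → L)) + 1)) := by
  classical
  set V := (Fin g × Fin r → L) with hV
  haveI : Module.Finite Fm L := Module.Finite.of_finite
  haveI : Module.Finite Fq L := Module.Finite.of_finite
  haveI : Module.Finite Fm V := Module.Finite.of_finite
  haveI : Module.Finite L V := Module.Finite.of_finite
  have hpre : ∀ c ∈ C, ∃ w : Fin g × Fin r → Fm,
      ∀ x, algebraMap Fm L (w x) = c x := fun c hc =>
    ⟨fun x => (hCval c hc x).choose, fun x => (hCval c hc x).choose_spec⟩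
  set b : Module.Basis (Fin (Module.finrank Fm L)) Fm L := Module.finBasis Fm L with hb
  -- linear independence transfer
  have li : ∀ {k : ℕ} (v : Fin k → V), (∀ i, v i ∈ C) → LinearIndependent Fm v →
      LinearIndependent L v := by
    intro k v hvC hli
    choose w hw using fun i => hpre (v i) (hvC i)
    rw [Fintype.linearIndependent_iff]
    intro a ha i
    have hcoord : ∀ t, ∀ i, b.coord t (a i) = 0 := by
      intro t
      refine Fintype.linearIndependent_iff.mp hli _ ?_
      funext x
      have := key_coord b a v w hw t x
      rw [ha] at this
      rw [show (0 : V) x = (0 : L) from rfl, map_zero, map_zero] at this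
      exact this.symm
    have : b.repr (a i) = 0 := by
      ext t
      simpa [Module.Basis.coord_apply] using hcoord t i
    simpa using congrArg b.repr.symm this
  -- reduction of span elements to code elements with smaller weight
  have reduce : ∀ e ∈ Submodule.span L (C : Set V), e ≠ 0 →
      ∃ d ∈ C, d ≠ 0 ∧ wtSR Fq d ≤ wtSR Fq e := by
    intro e he hne
    obtain ⟨k, a, c, hsum⟩ := Submodule.mem_span_set'.mp he
    choose w hw using fun i => hpre (c i : V) (c i).2
    set d : Fin (Module.finrank Fm L) → V :=
      fun t => ∑ i, (b.coord t (a i)) • (c i : V) with hd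
    have hdC : ∀ t, d t ∈ C := fun t =>
      Submodule.sum_mem _ fun i _ => C.smul_mem _ (c i).2
    have hkey : ∀ t x, algebraMap Fm L (b.coord t (e x)) = d t x := by
      intro t x
      rw [← hsum]
      exact key_coord b a (fun i => (c i : V)) w hw t x
    obtain ⟨t, ht⟩ : ∃ t, d t ≠ 0 := by
      by_contra hall
      push_neg at hall
      apply hne
      funext x
      show e x = 0
      refine b.ext_elem_iff.mpr fun t => ?_
      have := hkey t x
      rw [hall t] at this
      have h0 : b.coord t (e x) = 0 := by
        apply (algebraMap Fm L).injective
        rw [map_zero]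
        exact this
      simpa [Module.Basis.coord_apply] using h0
    refine ⟨d t, hdC t, ht, ?_⟩
    have hψ : d t = fun x => (((Algebra.linearMap Fm L).restrictScalars Fq).comp
        ((b.coord t).restrictScalars Fq)) (e x) := by
      funext x
      simp only [LinearMap.comp_apply, LinearMap.restrictScalars_apply,
        Algebra.linearMap_apply]
      exact (hkey t x).symm
    rw [hψ]
    exact wtSR_comp_le _ e
  -- Part (i)
  haveI : FiniteDimensional Fm ↥C := inferInstance
  set bC : Module.Basis (Fin (Module.finrank Fm ↥C)) Fm ↥C := Module.finBasis Fm ↥C with hbC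
  set v : Fin (Module.finrank Fm ↥C) → V := fun i => (bC i : V) with hv2
  have hvC : ∀ i, v i ∈ C := fun i => (bC i).2
  have liFm : LinearIndependent Fm v :=
    bC.linearIndependent.map' C.subtype C.ker_subtype
  have liL : LinearIndependent L v := li v hvC liFm
  have hspanFm : Submodule.span Fm (Set.range v) = C := by
    have : Set.range v = C.subtype '' Set.range bC := by
      rw [← Set.range_comp]; rfl
    rw [this, Submodule.span_image, bC.span_eq, Submodule.map_top,
      Submodule.range_subtype]
  have hspanL : Submodule.span L (Set.range v) = Submodule.span L (C : Set V) := by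
    conv_rhs => rw [← hspanFm]
    rw [Submodule.span_span_of_tower]
  have part1 : Module.finrank L ↥(Submodule.span L (C : Set V))
      = Module.finrank Fm ↥C := by
    rw [← hspanL, finrank_span_eq_card liL, Fintype.card_fin]
  -- Part (ii)
  have hCsetA : dSR Fq (C : Set V)
      = sInf {w | ∃ e ∈ (C : Set V), e ≠ 0 ∧ wtSR Fq e = w} :=
    dSR_eq_of_zero_mem C.zero_mem (fun a ha b hb => C.sub_mem ha hb)
  have hCsetB : dSR Fq ((Submodule.span L (C : Set V) : Submodule L V) : Set V)
      = sInf {w | ∃ e ∈ (Submodule.span L (C : Set V) : Set V),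
          e ≠ 0 ∧ wtSR Fq e = w} :=
    dSR_eq_of_zero_mem (Submodule.zero_mem _)
      (fun a ha b hb => Submodule.sub_mem _ ha hb)
  obtain ⟨c0, hc0mem, hc0ne⟩ := C.ne_bot_iff.mp hC
  have hAne : {w | ∃ e ∈ (C : Set V), e ≠ 0 ∧ wtSR Fq e = w}.Nonempty :=
    ⟨wtSR Fq c0, c0, hc0mem, hc0ne, rfl⟩
  have hAB : {w | ∃ e ∈ (C : Set V), e ≠ 0 ∧ wtSR Fq e = w}
      ⊆ {w | ∃ e ∈ (Submodule.span L (C : Set V) : Set V), e ≠ 0 ∧ wtSR Fq e = w} := by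
    rintro wgt ⟨e, he, hne, rfl⟩
    exact ⟨e, Submodule.subset_span he, hne, rfl⟩
  have part2 : dSR Fq ((Submodule.span L (C : Set V) : Submodule L V) : Set V)
      = dSR Fq (C : Set V) := by
    rw [hCsetA, hCsetB]
    refine le_antisymm (Nat.sInf_le (hAB (Nat.sInf_mem hAne))) ?_
    obtain ⟨e, he, hne, hwe⟩ := Nat.sInf_mem (hAne.mono hAB)
    obtain ⟨d, hdC, hdne, hwd⟩ := reduce e he hne
    calc sInf {w | ∃ e ∈ (C : Set V), e ≠ 0 ∧ wtSR Fq e = w}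
        ≤ wtSR Fq d := Nat.sInf_le ⟨d, hdC, hdne, rfl⟩
      _ ≤ wtSR Fq e := hwd
      _ = _ := hwe
  -- Part (iii)
  refine ⟨part1, part2, ?_⟩
  haveI : Fintype ↥C := Fintype.ofFinite _
  haveI : Fintype ↥(Submodule.span L (C : Set V)) := Fintype.ofFinite _
  have cardC : Nat.card ↥C = (q ^ m) ^ Module.finrank Fm ↥C := by
    rw [Nat.card_eq_fintype_card, Module.card_eq_pow_finrank (K := Fm), hcm]
  have cardS : Nat.card ↥(Submodule.span L (C : Set V))
      = (q ^ (m * M)) ^ Module.finrank Fm ↥C := by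
    rw [Nat.card_eq_fintype_card, Module.card_eq_pow_finrank (K := L), hcL, part1]
  rw [cardC, cardS, part2]
  have h2m : 2 ≤ q ^ m := le_trans hq.two_le (Nat.le_self_pow hm.ne' q)
  have h2mM : 2 ≤ q ^ (m * M) :=
    le_trans hq.two_le (Nat.le_self_pow (by positivity) q)
  constructor
  · intro h
    exact congrArg _ (Nat.pow_right_injective h2m h)
  · intro h
    exact congrArg _ (Nat.pow_right_injective h2mM h)
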